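/- Suppose a permutation a ∈ S_n has two distinct cycles (i₀ ⋯ i_{d-1}) and (j₀ ⋯ j_{d-1}) of the same length d ≥ 1 such that f(i_k) = f(j_k) for every 0 ≤ k ≤ d-1. Then a is not f-simple. -/

import Mathlib

/-- Lemma 4.4 (ii): if `a` has two disjoint cycles `(i₀ ⋯ i_{d-1})` and
`(j₀ ⋯ j_{d-1})` of the same length `d ≥ 1` with `f (i_k) = f (j_k)` for all
`0 ≤ k < d`, then `a` is not `f`-simple. -/
theorem stmt6 (n : ℕ) (X : Type*) (f : Fin n → X) (a : Equiv.Perm (Fin n))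
    (i₀ j₀ : Fin n) (d : ℕ) (hd : 1 ≤ d)
    (hdisj : ∀ k l : ℕ, (a ^ k) i₀ ≠ (a ^ l) j₀)
    (hpi : Function.minimalPeriod (⇑a) i₀ = d)
    (hpj : Function.minimalPeriod (⇑a) j₀ = d)
    (hf : ∀ k < d, f ((a ^ k) i₀) = f ((a ^ k) j₀)) :
    ∃ σ : Equiv.Perm (Fin n), σ ≠ 1 ∧ (∀ i, f (σ i) = f i) ∧ σ * a = a * σ := by
  classical
  have key : ∀ x : Fin n, Function.minimalPeriod (⇑a) x = d →
      (∀ k l, k < d → l < d → (a ^ k) x = (a ^ l) x → k = l) ∧ (a ^ d) x = x := by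
    intro x hx
    constructor
    · intro k l hk hl h
      have h2 := Function.iterate_injOn_Iio_minimalPeriod (f := ⇑a) (x := x)
      rw [hx] at h2
      exact h2 hk hl (by simpa [Equiv.Perm.coe_pow] using h)
    · have h2 := Function.iterate_minimalPeriod (f := ⇑a) (x := x)
      rw [hx] at h2
      simpa [Equiv.Perm.coe_pow] using h2
  obtain ⟨inji, peri⟩ := key i₀ hpi
  obtain ⟨injj, perj⟩ := key j₀ hpj
  set P : Fin n → Prop := fun x => ∃ k, k < d ∧ (a ^ k) i₀ = x with hPdef
  set Q : Fin n → Prop := fun x => ∃ k, k < d ∧ (a ^ k) j₀ = x with hQdef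
  let g : Fin n → Fin n := fun x =>
    if h : P x then (a ^ (Classical.choose h)) j₀
    else if h : Q x then (a ^ (Classical.choose h)) i₀
    else x
  have hgP : ∀ k, k < d → g ((a ^ k) i₀) = (a ^ k) j₀ := by
    intro k hk
    have hx : P ((a ^ k) i₀) := ⟨k, hk, rfl⟩
    simp only [g, dif_pos hx]
    obtain ⟨hk', he⟩ := Classical.choose_spec hx
    rw [inji _ _ hk' hk he]
  have hQP : ∀ x, Q x → ¬ P x := by
    rintro x ⟨l, hl, rfl⟩ ⟨k, hk, h⟩
    exact hdisj k l h
  have hgQ : ∀ k, k < d → g ((a ^ k) j₀) = (a ^ k) i₀ := by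
    intro k hk
    have hx : Q ((a ^ k) j₀) := ⟨k, hk, rfl⟩
    have hnp : ¬ P ((a ^ k) j₀) := hQP _ hx
    simp only [g, dif_neg hnp, dif_pos hx]
    obtain ⟨hk', he⟩ := Classical.choose_spec hx
    rw [injj _ _ hk' hk he]
  have hgF : ∀ x, ¬ P x → ¬ Q x → g x = x := by
    intro x h1 h2
    simp only [g, dif_neg h1, dif_neg h2]
  have hPQ : ∀ x, P x → ¬ Q x := by
    rintro x ⟨k, hk, rfl⟩ ⟨l, hl, h⟩
    exact hdisj k l h.symm
  have hcomm : ∀ (k : ℕ) (x : Fin n), (a ^ k) (a x) = a ((a ^ k) x) := by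
    intro k x
    rw [← Equiv.Perm.mul_apply, ← Equiv.Perm.mul_apply, ← pow_succ, ← pow_succ']
  -- succ step inside orbit
  have succP : ∀ k, k < d → ∃ m, m < d ∧ (a ^ m) i₀ = a ((a ^ k) i₀) ∧
      (a ^ m) j₀ = a ((a ^ k) j₀) := by
    intro k hk
    rcases eq_or_lt_of_le (Nat.succ_le_of_lt hk) with h | h
    · refine ⟨0, hd, ?_, ?_⟩
      · rw [← Equiv.Perm.mul_apply, ← pow_succ', (show k+1=d from h), peri, pow_zero, Equiv.Perm.one_apply]
      · rw [← Equiv.Perm.mul_apply, ← pow_succ', (show k+1=d from h), perj, pow_zero, Equiv.Perm.one_apply]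
    · exact ⟨k + 1, h, by rw [pow_succ', Equiv.Perm.mul_apply],
        by rw [pow_succ', Equiv.Perm.mul_apply]⟩
  have predP : ∀ x, P (a x) → P x := by
    rintro x ⟨k, hk, he⟩
    rcases k with _ | m
    · refine ⟨d - 1, Nat.sub_lt hd Nat.one_pos, a.injective ?_⟩
      rw [← Equiv.Perm.mul_apply, ← pow_succ', Nat.sub_add_cancel hd, peri]
      simpa using he
    · refine ⟨m, Nat.lt_of_succ_lt hk, a.injective ?_⟩
      rw [← Equiv.Perm.mul_apply, ← pow_succ']
      exact he
  have predQ : ∀ x, Q (a x) → Q x := by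
    rintro x ⟨k, hk, he⟩
    rcases k with _ | m
    · refine ⟨d - 1, Nat.sub_lt hd Nat.one_pos, a.injective ?_⟩
      rw [← Equiv.Perm.mul_apply, ← pow_succ', Nat.sub_add_cancel hd, perj]
      simpa using he
    · refine ⟨m, Nat.lt_of_succ_lt hk, a.injective ?_⟩
      rw [← Equiv.Perm.mul_apply, ← pow_succ']
      exact he
  have hginv : Function.Involutive g := by
    intro x
    by_cases hx : P x
    · obtain ⟨k, hk, rfl⟩ := hx
      rw [hgP k hk, hgQ k hk]
    · by_cases hx' : Q x
      · obtain ⟨k, hk, rfl⟩ := hx'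
        rw [hgQ k hk, hgP k hk]
      · rw [hgF x hx hx', hgF x hx hx']
  refine ⟨hginv.toPerm g, ?_, ?_, ?_⟩
  · intro hcon
    have h1 : g i₀ = i₀ := by
      have := congrArg (fun σ : Equiv.Perm (Fin n) => σ i₀) hcon
      simpa using this
    have h2 : g i₀ = j₀ := by simpa using hgP 0 hd
    exact hdisj 0 0 (by simpa using (h1.symm.trans h2))
  · intro x
    show f (g x) = f x
    by_cases hx : P x
    · obtain ⟨k, hk, rfl⟩ := hx
      rw [hgP k hk, hf k hk]
    · by_cases hx' : Q x
      · obtain ⟨k, hk, rfl⟩ := hx'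
        rw [hgQ k hk, hf k hk]
      · rw [hgF x hx hx']
  · refine Equiv.ext fun x => ?_
    show g (a x) = a (g x)
    by_cases hx : P x
    · obtain ⟨k, hk, rfl⟩ := hx
      obtain ⟨m, hm, h1, h2⟩ := succP k hk
      rw [hgP k hk, ← h1, ← h2, hgP m hm]
    · by_cases hx' : Q x
      · obtain ⟨k, hk, rfl⟩ := hx'
        -- symmetric succ step for j-orbit
        rcases eq_or_lt_of_le (Nat.succ_le_of_lt hk) with h | h
        · have e1 : a ((a ^ k) j₀) = (a ^ 0) j₀ := by
            rw [← Equiv.Perm.mul_apply, ← pow_succ', (show k+1=d from h), perj, pow_zero,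
              Equiv.Perm.one_apply]
          have e2 : a ((a ^ k) i₀) = (a ^ 0) i₀ := by
            rw [← Equiv.Perm.mul_apply, ← pow_succ', (show k+1=d from h), peri, pow_zero,
              Equiv.Perm.one_apply]
          rw [hgQ k hk, e1, e2, hgQ 0 hd]
        · have e1 : a ((a ^ k) j₀) = (a ^ (k + 1)) j₀ := by
            rw [pow_succ', Equiv.Perm.mul_apply]
          have e2 : a ((a ^ k) i₀) = (a ^ (k + 1)) i₀ := by
            rw [pow_succ', Equiv.Perm.mul_apply]
          rw [hgQ k hk, e1, e2, hgQ (k + 1) h]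
      · rw [hgF x hx hx', hgF (a x) (fun h => hx (predP x h)) (fun h => hx' (predQ x h))]
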